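/- Let z ∈ ℝ^d be nonzero and set ẑ = z/‖z‖₂. Let a⁰ ∈ ℝ and w⁰ ∈ ℝ^d, and suppose (a, w) : ℝ → ℝ × ℝ^d is differentiable and satisfies a'(t) = ⟨w(t), z⟩ and w'(t) = a(t)·z for all t, with a(0) = a⁰ and w(0) = w⁰. Then for all t ∈ ℝ: a(t) = cosh(‖z‖₂ t)·a⁰ + sinh(‖z‖₂ t)·⟨w⁰, ẑ⟩, and w(t) = sinh(‖z‖₂ t)·a⁰·ẑ + (cosh(‖z‖₂ t) − 1)·⟨w⁰, ẑ⟩·ẑ + w⁰. In particular, the component of w(t) orthogonal to z is constant in t: w(t) − ⟨w(t), ẑ⟩ẑ = w⁰ − ⟨w⁰, ẑ⟩ẑ. -/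

import Mathlib

lemma aux_exp_ode (c : ℝ) (f : ℝ → ℝ) (hf : ∀ t, HasDerivAt f (c * f t) t) :
    ∀ t, f t = f 0 * Real.exp (c * t) := by
  have hd : ∀ s, HasDerivAt (fun t => f t * Real.exp (-c * t)) 0 s := by
    intro s
    have he : HasDerivAt (fun t => Real.exp (-c * t)) (Real.exp (-c * s) * -c) s := by
      have := ((hasDerivAt_id s).const_mul (-c)).exp
      simpa [mul_comm] using this
    have := (hf s).mul he
    exact this.congr_deriv (by ring)
  have hc : ∀ t, f t * Real.exp (-c * t) = f 0 := by
    intro t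
    have := is_const_of_deriv_eq_zero (f := fun t => f t * Real.exp (-c * t))
      (fun x => (hd x).differentiableAt) (fun x => (hd x).deriv) t 0
    simpa using this
  intro t
  have h1 := hc t
  have hmul : Real.exp (c*t) * Real.exp (-c*t) = 1 := by
    rw [← Real.exp_add]; ring_nf; exact Real.exp_zero
  calc f t = f t * (Real.exp (-c * t) * Real.exp (c * t)) := by
        rw [mul_comm (Real.exp (-c*t))]; rw [hmul]; ring
    _ = (f t * Real.exp (-c * t)) * Real.exp (c * t) := by ring
    _ = f 0 * Real.exp (c * t) := by rw [h1]


/-- Explicit solution of the linearized dynamics `a' = ⟨w, z⟩`, `w' = a • z`: with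
`ẑ = z/‖z‖`, one has `a(t) = cosh(‖z‖t) a⁰ + sinh(‖z‖t) ⟨w⁰, ẑ⟩` and
`w(t) = sinh(‖z‖t) a⁰ ẑ + (cosh(‖z‖t) - 1) ⟨w⁰, ẑ⟩ ẑ + w⁰`; in particular the component of
`w(t)` orthogonal to `z` is constant in `t`. -/
theorem stmt_15 (d : ℕ) (z : EuclideanSpace ℝ (Fin d)) (hz : z ≠ 0)
    (zhat : EuclideanSpace ℝ (Fin d)) (hzhat : zhat = ‖z‖⁻¹ • z)
    (a0 : ℝ) (w0 : EuclideanSpace ℝ (Fin d))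
    (a : ℝ → ℝ) (w : ℝ → EuclideanSpace ℝ (Fin d))
    (ha0 : a 0 = a0) (hw0 : w 0 = w0)
    (hda : ∀ t : ℝ, HasDerivAt a (inner ℝ (w t) z : ℝ) t)
    (hdw : ∀ t : ℝ, HasDerivAt w (a t • z) t) :
    ∀ t : ℝ,
      a t = Real.cosh (‖z‖ * t) * a0 + Real.sinh (‖z‖ * t) * (inner ℝ w0 zhat : ℝ)
      ∧ w t = (Real.sinh (‖z‖ * t) * a0) • zhat
          + ((Real.cosh (‖z‖ * t) - 1) * (inner ℝ w0 zhat : ℝ)) • zhat + w0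
      ∧ w t - (inner ℝ (w t) zhat : ℝ) • zhat = w0 - (inner ℝ w0 zhat : ℝ) • zhat := by
  set r : ℝ := ‖z‖ with hr_def
  have hr : 0 < r := norm_pos_iff.mpr hz
  have hz_eq : z = r • zhat := by
    rw [hzhat, smul_smul, mul_inv_cancel₀ hr.ne', one_smul]
  set b : ℝ → ℝ := fun t => (inner ℝ (w t) zhat : ℝ) with hb_def
  have hinner_wz : ∀ t, (inner ℝ (w t) z : ℝ) = r * b t := by
    intro t
    rw [hz_eq, real_inner_smul_right]
  have hzz : (inner ℝ z zhat : ℝ) = r := by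
    rw [hzhat, real_inner_smul_right, real_inner_self_eq_norm_mul_norm]
    field_simp
    rw [hr_def]
  have hdb : ∀ t, HasDerivAt b (r * a t) t := by
    intro t
    have h := (hdw t).inner ℝ (hasDerivAt_const t zhat)
    simpa only [inner_zero_right, add_zero, zero_add, real_inner_smul_left, hzz, mul_comm] using h
  set b0 : ℝ := (inner ℝ w0 zhat : ℝ) with hb0_def
  have hb0 : b 0 = b0 := by show (inner ℝ (w 0) zhat : ℝ) = b0; rw [hw0]
  -- u = a + b, v = a - b
  have hu : ∀ t, a t + b t = (a0 + b0) * Real.exp (r * t) := by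
    have := aux_exp_ode r (fun t => a t + b t) (fun t => by
      have := (hda t).add (hdb t)
      rw [hinner_wz t] at this
      exact this.congr_deriv (by ring))
    intro t; simpa [ha0, hb0] using this t
  have hv : ∀ t, a t - b t = (a0 - b0) * Real.exp (-r * t) := by
    have := aux_exp_ode (-r) (fun t => a t - b t) (fun t => by
      have := (hda t).sub (hdb t)
      rw [hinner_wz t] at this
      exact this.congr_deriv (by ring))
    intro t; simpa [ha0, hb0] using this t
  have ha_eq : ∀ t, a t = Real.cosh (r * t) * a0 + Real.sinh (r * t) * b0 := by
    intro t
    have h1 := hu t; have h2 := hv t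
    rw [Real.cosh_eq, Real.sinh_eq]
    have : Real.exp (-(r * t)) = Real.exp (-r * t) := by ring_nf
    rw [this]; linarith
  have hb_eq : ∀ t, b t = Real.sinh (r * t) * a0 + Real.cosh (r * t) * b0 := by
    intro t
    have h1 := hu t; have h2 := hv t
    rw [Real.cosh_eq, Real.sinh_eq]
    have : Real.exp (-(r * t)) = Real.exp (-r * t) := by ring_nf
    rw [this]; linarith
  -- candidate for w
  set C : ℝ → EuclideanSpace ℝ (Fin d) := fun t =>
    (Real.sinh (r * t) * a0) • zhat + ((Real.cosh (r * t) - 1) * b0) • zhat + w0 with hC_def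
  have hdC : ∀ t, HasDerivAt C (a t • z) t := by
    intro t
    have h1 := ((((hasDerivAt_id t).const_mul r).sinh).mul_const a0).smul_const zhat
    have h2 := (((((hasDerivAt_id t).const_mul r).cosh).sub_const 1).mul_const b0).smul_const zhat
    have h := (h1.add h2).add_const w0
    refine h.congr_deriv ?_
    rw [hz_eq, smul_smul, ha_eq t]
    simp only [id_eq, mul_one]
    module
  have hg : ∀ s, HasDerivAt (fun t => w t - C t) 0 s := by
    intro s
    have := (hdw s).sub (hdC s)
    exact this.congr_deriv (sub_self _)
  have hconst : ∀ t, w t - C t = w 0 - C 0 := by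
    intro t
    exact is_const_of_fderiv_eq_zero (fun x => ((hg x).differentiableAt))
      (fun x => by
        rw [(hg x).hasFDerivAt.fderiv]
        ext u
        simp) t 0
  have hC0 : C 0 = w0 := by simp [hC_def]
  have hw_eq : ∀ t, w t = C t := by
    intro t
    have := hconst t
    rw [hw0, hC0] at this
    have h2 : w t - C t = 0 := by rw [this]; abel
    have := sub_eq_zero.mp h2
    exact this
  intro t
  refine ⟨ha_eq t, by rw [hw_eq t], ?_⟩
  have hbt : (inner ℝ (w t) zhat : ℝ) = Real.sinh (r * t) * a0 + Real.cosh (r * t) * b0 :=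
    hb_eq t
  rw [hbt, hw_eq t, hC_def]
  simp only
  module
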